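/- The generating function identity Σ_{n=0}^∞ C_n(cos θ; β|q) z^n = (βe^{iθ}z, βe^{−iθ}z; q)_∞ / (e^{iθ}z, e^{−iθ}z; q)_∞ holds for |z| < 1, |q| < 1. -/

import Mathlib

open Finset Filter

/-- The q-Pochhammer symbol `(a;q)_n`. -/
noncomputable def qPoch (a q : ℂ) (n : ℕ) : ℂ := ∏ j ∈ Finset.range n, (1 - a * q ^ j)

/-- The continuous q-ultraspherical polynomial C_n(cos θ; β | q). -/
noncomputable def qUltra (n : ℕ) (β q θ : ℂ) : ℂ :=
  ∑ k ∈ range (n + 1),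
    qPoch β q k * qPoch β q (n - k) / (qPoch q q k * qPoch q q (n - k)) *
      Complex.exp (Complex.I * ((n : ℂ) - 2 * (k : ℂ)) * θ)

/-- Coefficients of the q-binomial series. -/
noncomputable def qc (β q : ℂ) (n : ℕ) : ℂ := qPoch β q n / qPoch q q n

lemma qPoch_def (a q : ℂ) (n : ℕ) : qPoch a q n = ∏ j ∈ Finset.range n, (1 - a * q ^ j) := rfl

lemma qPoch_zero (a q : ℂ) : qPoch a q 0 = 1 := by simp [qPoch]

lemma qPoch_succ (a q : ℂ) (n : ℕ) : qPoch a q (n + 1) = qPoch a q n * (1 - a * q ^ n) :=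
  Finset.prod_range_succ _ _

lemma one_sub_ne_zero' {w : ℂ} (h : ‖w‖ < 1) : 1 - w ≠ 0 := by
  intro hc
  have : w = 1 := by linear_combination -hc
  rw [this] at h; simp at h

lemma abs_mul_pow_lt {w q : ℂ} (hw : ‖w‖ < 1) (hq : ‖q‖ < 1) (j : ℕ) :
    ‖w * q ^ j‖ < 1 := by
  rw [norm_mul, norm_pow]
  have h1 : ‖q‖ ^ j ≤ 1 := pow_le_one₀ (norm_nonneg q) hq.le
  have h2 : ‖w‖ * ‖q‖ ^ j ≤ ‖w‖ * 1 :=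
    mul_le_mul_of_nonneg_left h1 (norm_nonneg w)
  calc ‖w‖ * ‖q‖ ^ j ≤ ‖w‖ * 1 := h2
    _ = ‖w‖ := by ring
    _ < 1 := hw

lemma qPoch_ne_zero {a q : ℂ} (ha : ‖a‖ < 1) (hq : ‖q‖ < 1) (n : ℕ) :
    qPoch a q n ≠ 0 :=
  Finset.prod_ne_zero_iff.2 fun j _ => one_sub_ne_zero' (abs_mul_pow_lt ha hq j)

lemma qc_ne_zero {β q : ℂ} (hβ : ‖β‖ < 1) (hq : ‖q‖ < 1) (n : ℕ) :
    qc β q n ≠ 0 :=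
  div_ne_zero (qPoch_ne_zero hβ hq n) (qPoch_ne_zero hq hq n)

lemma qc_zero (β q : ℂ) : qc β q 0 = 1 := by simp [qc, qPoch]

lemma qc_rec {β q : ℂ} (hβ : ‖β‖ < 1) (hq : ‖q‖ < 1) (n : ℕ) :
    qc β q (n + 1) * (1 - q ^ (n + 1)) = qc β q n * (1 - β * q ^ n) := by
  have h1 := qPoch_ne_zero hq hq n
  have h2 := qPoch_ne_zero hq hq (n + 1)
  rw [qc, qc, qPoch_succ, qPoch_succ]
  have hqq : q * q ^ n = q ^ (n + 1) := (pow_succ' q n).symm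
  rw [hqq]
  rw [qPoch_succ, hqq] at h2
  have h3 := right_ne_zero_of_mul h2
  field_simp

lemma qc_summable_norm {β q w : ℂ} (hβ : ‖β‖ < 1) (hq : ‖q‖ < 1)
    (hw : ‖w‖ < 1) : Summable (fun n => ‖qc β q n * w ^ n‖) := by
  rcases eq_or_ne w 0 with rfl | hw0
  · apply summable_of_ne_finset_zero (s := {0})
    intro n hn
    have : n ≠ 0 := by simpa using hn
    simp [zero_pow this]
  · have hq0 : Tendsto (fun n : ℕ => q ^ n) atTop (nhds 0) :=
      tendsto_pow_atTop_nhds_zero_of_norm_lt_one (by assumption)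
    have h1 : Tendsto (fun n : ℕ => (1 : ℂ) - β * q ^ n) atTop (nhds 1) := by
      have := tendsto_const_nhds (x := (1:ℂ)) (f := atTop (α := ℕ)) |>.sub (hq0.const_mul β)
      simpa using this
    have h2 : Tendsto (fun n : ℕ => (1 : ℂ) - q ^ (n + 1)) atTop (nhds 1) := by
      have := tendsto_const_nhds (x := (1:ℂ)) (f := atTop (α := ℕ)) |>.sub (hq0.mul_const q)
      simpa [pow_succ] using this
    have hR : Tendsto (fun n : ℕ =>
        ‖1 - β * q ^ n‖ / ‖1 - q ^ (n + 1)‖ * ‖w‖)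
        atTop (nhds (‖w‖)) := by
      have hA : Tendsto (fun n : ℕ => ‖1 - β * q ^ n‖) atTop (nhds 1) := by
        have := (continuous_norm.tendsto 1).comp h1
        simpa [Function.comp_def] using this
      have hB : Tendsto (fun n : ℕ => ‖1 - q ^ (n + 1)‖) atTop (nhds 1) := by
        have := (continuous_norm.tendsto 1).comp h2
        simpa [Function.comp_def] using this
      have := (hA.div hB one_ne_zero).mul_const (‖w‖)
      simpa using this
    apply summable_of_ratio_test_tendsto_lt_one hw (f := fun n => ‖qc β q n * w ^ n‖)
    · filter_upwards with n
      simp only [ne_eq, norm_eq_zero, mul_eq_zero, not_or]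
      exact ⟨qc_ne_zero hβ hq n, pow_ne_zero n hw0⟩
    · apply hR.congr
      intro n
      have key : ‖qc β q (n+1)‖ * ‖1 - q ^ (n + 1)‖
          = ‖qc β q n‖ * ‖1 - β * q ^ n‖ := by
        rw [← norm_mul, ← norm_mul, qc_rec hβ hq n]
      have hcn : ‖qc β q n‖ ≠ 0 := by
        simpa using qc_ne_zero hβ hq n
      have hdn : ‖1 - q ^ (n + 1)‖ ≠ 0 := by
        have : ‖q ^ (n+1)‖ < 1 := by
          simpa [pow_succ'] using abs_mul_pow_lt hq hq n
        exact norm_ne_zero_iff.2 (one_sub_ne_zero' this)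
      have hwn : ‖w‖ ^ n ≠ 0 := pow_ne_zero n (by simpa using hw0)
      rw [Real.norm_eq_abs, Real.norm_eq_abs, abs_of_nonneg (norm_nonneg _),
        abs_of_nonneg (norm_nonneg _)]
      simp only [norm_mul, norm_pow]
      field_simp
      rw [pow_succ ‖w‖]
      field_simp at key ⊢
      linear_combination (-1 : ℝ) * key

lemma qc_summable {β q w : ℂ} (hβ : ‖β‖ < 1) (hq : ‖q‖ < 1)
    (hw : ‖w‖ < 1) : Summable (fun n => qc β q n * w ^ n) :=
  (qc_summable_norm hβ hq hw).of_norm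

lemma abs_qw_lt {w q : ℂ} (hw : ‖w‖ < 1) (hq : ‖q‖ < 1) :
    ‖q * w‖ < 1 := by
  have := abs_mul_pow_lt hw hq 1
  simpa [mul_comm] using this

lemma qFE {β q w : ℂ} (hβ : ‖β‖ < 1) (hq : ‖q‖ < 1)
    (hw : ‖w‖ < 1) :
    (1 - w) * ∑' n, qc β q n * w ^ n = (1 - β * w) * ∑' n, qc β q n * (q * w) ^ n := by
  have hqw : ‖q * w‖ < 1 := abs_qw_lt hw hq
  have hf : Summable (fun n => qc β q n * w ^ n) := qc_summable hβ hq hw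
  have hg : Summable (fun n => qc β q n * (q * w) ^ n) := qc_summable hβ hq hqw
  set S : ℂ := ∑' n, qc β q n * w ^ n with hS
  set T : ℂ := ∑' n, qc β q n * (q * w) ^ n with hT
  have hAsum : Summable (fun n => qc β q n * (1 - q ^ n) * w ^ n) := by
    apply (hf.sub hg).congr
    intro n
    rw [mul_pow]; ring
  have hBsum : Summable (fun n => qc β q n * (1 - β * q ^ n) * w ^ n) := by
    apply (hf.sub (hg.mul_left β)).congr
    intro n
    rw [mul_pow]; ring
  have key : S - T = w * (S - β * T) := by
    have e0 : S - T = ∑' n, qc β q n * (1 - q ^ n) * w ^ n := by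
      rw [hS, hT, ← Summable.tsum_sub hf hg]
      exact tsum_congr fun n => by rw [mul_pow]; ring
    have e1 : S - β * T = ∑' n, qc β q n * (1 - β * q ^ n) * w ^ n := by
      rw [hS, hT, ← tsum_mul_left, ← Summable.tsum_sub hf (hg.mul_left β)]
      exact tsum_congr fun n => by rw [mul_pow]; ring
    rw [e0, e1, ← tsum_mul_left]
    rw [hAsum.tsum_eq_zero_add]
    simp only [pow_zero, qc_zero]
    rw [show (1 : ℂ) * (1 - 1) * 1 = 0 by ring, zero_add]
    apply tsum_congr
    intro n
    have := qc_rec hβ hq (β := β) n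
    calc qc β q (n + 1) * (1 - q ^ (n + 1)) * w ^ (n + 1)
        = qc β q n * (1 - β * q ^ n) * w ^ (n + 1) := by rw [this]
      _ = w * (qc β q n * (1 - β * q ^ n) * w ^ n) := by rw [pow_succ]; ring
  linear_combination key

lemma qIter {β q w : ℂ} (hβ : ‖β‖ < 1) (hq : ‖q‖ < 1)
    (hw : ‖w‖ < 1) (N : ℕ) :
    (∑' n, qc β q n * w ^ n) * qPoch w q N
      = qPoch (β * w) q N * ∑' n, qc β q n * (q ^ N * w) ^ n := by
  induction N with
  | zero => simp [qPoch_zero]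
  | succ N ih =>
    have hwN : ‖q ^ N * w‖ < 1 := by
      have := abs_mul_pow_lt hw hq N
      simpa [mul_comm] using this
    have hfe := qFE hβ hq hwN
    have hcast : (∑' n, qc β q n * (q * (q ^ N * w)) ^ n)
        = ∑' n, qc β q n * (q ^ (N + 1) * w) ^ n := by
      rw [show q * (q ^ N * w) = q ^ (N + 1) * w by ring]
    rw [hcast] at hfe
    rw [qPoch_succ, qPoch_succ]
    have h1 : (1 - q ^ N * w) * (∑' n, qc β q n * (q ^ N * w) ^ n)
        = (1 - β * (q ^ N * w)) * ∑' n, qc β q n * (q ^ (N + 1) * w) ^ n := hfe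
    linear_combination (1 - w * q ^ N) * ih + qPoch (β * w) q N * h1

lemma qlog_summable {w q : ℂ} (hw : ‖w‖ < 1) (hq : ‖q‖ < 1) :
    Summable (fun j => Complex.log (1 - w * q ^ j)) := by
  have hgeo : Summable (fun j : ℕ => 3 / 2 * (‖w‖ * ‖q‖ ^ j)) := by
    exact ((summable_geometric_of_lt_one (norm_nonneg q) hq).mul_left
      (‖w‖)).mul_left (3 / 2)
  apply Summable.of_norm_bounded_eventually_nat hgeo
  have htend : Tendsto (fun j : ℕ => ‖w‖ * ‖q‖ ^ j) atTop (nhds 0) := by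
    have := (tendsto_pow_atTop_nhds_zero_of_norm_lt_one
      (show ‖‖q‖‖ < 1 by rwa [Real.norm_eq_abs, abs_of_nonneg (norm_nonneg q)]))
    simpa using this.const_mul (‖w‖)
  filter_upwards [htend.eventually_le_const (show (0:ℝ) < 1/2 by norm_num)] with j hj
  have habs : ‖-(w * q ^ j)‖ ≤ 1 / 2 := by
    rw [norm_neg, norm_mul, norm_pow]
    exact hj
  have := Complex.norm_log_one_add_half_le_self habs
  rw [show (1 : ℂ) + -(w * q ^ j) = 1 - w * q ^ j by ring] at this
  refine this.trans ?_
  rw [norm_neg, norm_mul, norm_pow]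

lemma qProd_eq_exp {w q : ℂ} (hw : ‖w‖ < 1) (hq : ‖q‖ < 1) :
    (∏' j, (1 - w * q ^ j)) = Complex.exp (∑' j, Complex.log (1 - w * q ^ j)) := by
  have h := Complex.cexp_tsum_eq_tprod (ι := ℕ) (f := fun j => 1 - w * q ^ j)
    (fun j => one_sub_ne_zero' (abs_mul_pow_lt hw hq j))
    (qlog_summable hw hq)
  exact h.symm

lemma qProd_ne_zero {w q : ℂ} (hw : ‖w‖ < 1) (hq : ‖q‖ < 1) :
    (∏' j, (1 - w * q ^ j)) ≠ 0 := by
  rw [qProd_eq_exp hw hq]; exact Complex.exp_ne_zero _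

lemma qProd_multipliable {w q : ℂ} (hw : ‖w‖ < 1) (hq : ‖q‖ < 1) :
    Multipliable (fun j => 1 - w * q ^ j) := by
  have h := Complex.multipliable_of_summable_log (qlog_summable hw hq)
  exact h

lemma qTail {β q w : ℂ} (hβ : ‖β‖ < 1) (hq : ‖q‖ < 1)
    (hw : ‖w‖ < 1) :
    Tendsto (fun N => ∑' n, qc β q n * (q ^ N * w) ^ n) atTop (nhds 1) := by
  have hMsum : Summable (fun n => ‖qc β q (n + 1) * w ^ (n + 1)‖) :=
    (summable_nat_add_iff 1).2 (qc_summable_norm hβ hq hw)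
  set M : ℝ := ∑' n, ‖qc β q (n + 1) * w ^ (n + 1)‖ with hM
  rw [tendsto_iff_norm_sub_tendsto_zero]
  apply squeeze_zero (fun N => norm_nonneg _) (g := fun N => ‖q‖ ^ N * M)
  · intro N
    have hv : ‖q ^ N * w‖ < 1 := by
      have := abs_mul_pow_lt hw hq N; simpa [mul_comm] using this
    have hsplit : (∑' n, qc β q n * (q ^ N * w) ^ n)
        = 1 + ∑' n, qc β q (n + 1) * (q ^ N * w) ^ (n + 1) := by
      rw [(qc_summable hβ hq hv).tsum_eq_zero_add]
      simp [qc_zero]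
    rw [hsplit, add_sub_cancel_left]
    apply tsum_of_norm_bounded (hMsum.hasSum.mul_left (‖q‖ ^ N))
    intro n
    have h1 : (‖q‖ ^ N) ^ (n + 1) ≤ ‖q‖ ^ N := by
      rw [← pow_mul]
      exact pow_le_pow_of_le_one (norm_nonneg q) hq.le
        (Nat.le_mul_of_pos_right N (Nat.succ_pos n))
    calc ‖qc β q (n + 1) * (q ^ N * w) ^ (n + 1)‖
        = (‖q‖ ^ N) ^ (n + 1) * ‖qc β q (n + 1) * w ^ (n + 1)‖ := by
          simp only [norm_mul, norm_pow, mul_pow]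
          ring
      _ ≤ ‖q‖ ^ N * ‖qc β q (n + 1) * w ^ (n + 1)‖ :=
          mul_le_mul_of_nonneg_right h1 (norm_nonneg _)
  · have : Tendsto (fun N : ℕ => ‖q‖ ^ N) atTop (nhds 0) := by
      apply tendsto_pow_atTop_nhds_zero_of_norm_lt_one
      rwa [Real.norm_eq_abs, abs_of_nonneg (norm_nonneg q)]
    simpa using this.mul_const M

lemma qBinom {β q w : ℂ} (hβ : ‖β‖ < 1) (hq : ‖q‖ < 1)
    (hw : ‖w‖ < 1) :
    (∑' n, qc β q n * w ^ n) * (∏' j, (1 - w * q ^ j)) = ∏' j, (1 - β * w * q ^ j) := by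
  have hβw : ‖β * w‖ < 1 := by
    rw [norm_mul]
    nlinarith [norm_nonneg β, norm_nonneg w]
  have hP : Tendsto (fun N => qPoch w q N) atTop (nhds (∏' j, (1 - w * q ^ j))) := by
    have := (qProd_multipliable hw hq).hasProd.tendsto_prod_nat
    apply this.congr
    intro N
    rw [qPoch_def]
  have hQ : Tendsto (fun N => qPoch (β * w) q N) atTop (nhds (∏' j, (1 - β * w * q ^ j))) := by
    have := (qProd_multipliable hβw hq).hasProd.tendsto_prod_nat
    apply this.congr
    intro N
    rw [qPoch_def]
  have h1 : Tendsto (fun N => (∑' n, qc β q n * w ^ n) * qPoch w q N) atTop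
      (nhds ((∑' n, qc β q n * w ^ n) * ∏' j, (1 - w * q ^ j))) := hP.const_mul _
  have h2 : Tendsto (fun N => qPoch (β * w) q N * ∑' n, qc β q n * (q ^ N * w) ^ n) atTop
      (nhds ((∏' j, (1 - β * w * q ^ j)) * 1)) := hQ.mul (qTail hβ hq hw)
  have heq : (fun N => (∑' n, qc β q n * w ^ n) * qPoch w q N)
      = fun N => qPoch (β * w) q N * ∑' n, qc β q n * (q ^ N * w) ^ n :=
    funext (qIter hβ hq hw)
  rw [heq] at h1
  have := tendsto_nhds_unique h1 h2
  simpa using this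


/-- Generating function for the continuous q-ultraspherical polynomials:
Σ_{n≥0} C_n(cos θ; β|q) zⁿ = (βe^{iθ}z, βe^{−iθ}z; q)_∞ / (e^{iθ}z, e^{−iθ}z; q)_∞. -/
theorem qUltra_generating_function (β q z : ℂ) (θ : ℝ)
    (hq : ‖q‖ < 1) (hβ : ‖β‖ < 1) (hz : ‖z‖ < 1) :
    ∑' n : ℕ, qUltra n β q (θ : ℂ) * z ^ n
      = ((∏' j : ℕ, (1 - β * Complex.exp (Complex.I * (θ : ℂ)) * z * q ^ j)) *
          (∏' j : ℕ, (1 - β * Complex.exp (-(Complex.I * (θ : ℂ))) * z * q ^ j))) /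
        ((∏' j : ℕ, (1 - Complex.exp (Complex.I * (θ : ℂ)) * z * q ^ j)) *
          (∏' j : ℕ, (1 - Complex.exp (-(Complex.I * (θ : ℂ))) * z * q ^ j))) := by
  set e₁ : ℂ := Complex.exp (Complex.I * (θ : ℂ)) with he₁
  set e₂ : ℂ := Complex.exp (-(Complex.I * (θ : ℂ))) with he₂
  have habs1 : ‖e₁ * z‖ < 1 := by
    rw [norm_mul, he₁, Complex.norm_exp]
    simp only [Complex.mul_re, Complex.I_re, Complex.ofReal_re, Complex.I_im, Complex.ofReal_im,
      zero_mul, one_mul, mul_zero, sub_zero, zero_sub, neg_zero, Real.exp_zero, one_mul]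
    simpa using hz
  have habs2 : ‖e₂ * z‖ < 1 := by
    rw [norm_mul, he₂, Complex.norm_exp]
    simp only [Complex.neg_re, Complex.mul_re, Complex.I_re, Complex.ofReal_re, Complex.I_im,
      Complex.ofReal_im, zero_mul, one_mul, mul_zero, sub_zero, zero_sub, neg_zero, neg_neg,
      Real.exp_zero, one_mul]
    simpa using hz
  -- Cauchy product
  have hcauchy := tsum_mul_tsum_eq_tsum_sum_range_of_summable_norm
    (f := fun k => qc β q k * (e₂ * z) ^ k) (g := fun m => qc β q m * (e₁ * z) ^ m)
    (qc_summable_norm hβ hq habs2) (qc_summable_norm hβ hq habs1)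
  have hT : (∑' n : ℕ, qUltra n β q (θ : ℂ) * z ^ n)
      = (∑' k, qc β q k * (e₂ * z) ^ k) * ∑' m, qc β q m * (e₁ * z) ^ m := by
    rw [hcauchy]
    apply tsum_congr
    intro n
    rw [qUltra, Finset.sum_mul]
    apply Finset.sum_congr rfl
    intro k hk
    have hkn : k ≤ n := by
      have := Finset.mem_range.1 hk; omega
    have hzz : z ^ k * z ^ (n - k) = z ^ n := by
      rw [← pow_add]; congr 1; omega
    have hee : e₂ ^ k * e₁ ^ (n - k) = Complex.exp (Complex.I * ((n : ℂ) - 2 * (k : ℂ)) * (θ : ℂ)) := by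
      rw [he₁, he₂, ← Complex.exp_nat_mul, ← Complex.exp_nat_mul, ← Complex.exp_add]
      congr 1
      rw [Nat.cast_sub hkn]
      ring
    symm
    calc qc β q k * (e₂ * z) ^ k * (qc β q (n - k) * (e₁ * z) ^ (n - k))
        = qPoch β q k * qPoch β q (n - k) / (qPoch q q k * qPoch q q (n - k)) *
            (e₂ ^ k * e₁ ^ (n - k)) * (z ^ k * z ^ (n - k)) := by
          simp only [qc, mul_pow]; ring
      _ = qPoch β q k * qPoch β q (n - k) / (qPoch q q k * qPoch q q (n - k)) *
            Complex.exp (Complex.I * ((n : ℂ) - 2 * (k : ℂ)) * (θ : ℂ)) * z ^ n := by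
          rw [hee, hzz]
  have hb1 := qBinom hβ hq habs1
  have hb2 := qBinom hβ hq habs2
  have hne1 := qProd_ne_zero habs1 hq
  have hne2 := qProd_ne_zero habs2 hq
  have hA : (∏' j : ℕ, (1 - β * (e₁ * z) * q ^ j)) = ∏' j : ℕ, (1 - β * e₁ * z * q ^ j) :=
    tprod_congr fun j => by ring_nf
  have hB : (∏' j : ℕ, (1 - β * (e₂ * z) * q ^ j)) = ∏' j : ℕ, (1 - β * e₂ * z * q ^ j) :=
    tprod_congr fun j => by ring_nf
  rw [hA] at hb1
  rw [hB] at hb2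
  rw [hT, eq_div_iff (mul_ne_zero hne1 hne2)]
  linear_combination (∑' k, qc β q k * (e₂ * z) ^ k) * (∏' j : ℕ, (1 - e₂ * z * q ^ j)) * hb1
    + (∏' j : ℕ, (1 - β * e₁ * z * q ^ j)) * hb2
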